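/- Let G : S ⥤ V be a functor admitting an asymmetric lens structure, i.e. there exist a category Λ, a discrete opfibration F : Λ ⥤ V and a bijective-on-objects functor P : Λ ⥤ S such that P ⋙ G = F. Let K : S' ⥤ V be any functor, and let a commutative square in Cat with top-left vertex T and functors H : T ⥤ S, H' : T ⥤ S' over the cospan (G, K) be a pullback square (in the sense of CategoryTheory.IsPullback in Cat). Then H' : T ⥤ S' also admits an asymmetric lens structure: there exist a category Λ'', a discrete opfibration F'' : Λ'' ⥤ S' and a bijective-on-objects functor P'' : Λ'' ⥤ T such that P'' ⋙ H' = F''. -/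

import Mathlib

open CategoryTheory

/-- A functor `F : C ⥤ D` is a discrete opfibration if for every object `c` of `C` and
every morphism `g : F.obj c ⟶ d` in `D`, there is a unique pair of an object `c'` and a
morphism `f : c ⟶ c'` with `F.obj c' = d` and `F.map f ≫ eqToHom _ = g`. -/
def IsDiscreteOpfib {C : Type*} [Category C] {D : Type*} [Category D] (F : C ⥤ D) : Prop :=
  ∀ (c : C) ⦃d : D⦄ (g : F.obj c ⟶ d),
    ∃! p : (c' : C) × (c ⟶ c'), ∃ h : F.obj p.1 = d, F.map p.2 ≫ eqToHom h = g

/-- An asymmetric lens structure on a functor `G : S ⥤ V` (in `Cat`): a category `Λ`,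
a discrete opfibration `F : Λ ⥤ V` and a bijective-on-objects functor `P : Λ ⥤ S`
(the Put) such that `P ⋙ G = F`. -/
def HasLensStructure {S V : Cat} (G : S ⟶ V) : Prop :=
  ∃ (Λ : Cat) (F : Λ ⟶ V) (P : Λ ⟶ S),
    IsDiscreteOpfib F.toFunctor ∧ Function.Bijective P.toFunctor.obj ∧ P ≫ G = F

section PB
variable {A : Type*} [Category A] {B : Type*} [Category B] {C : Type*} [Category C]
  (F : A ⥤ C) (K : B ⥤ C)

structure MyPB where
  l : A
  b : B
  eq : F.obj l = K.obj b

variable {F K}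

@[ext]
structure MyPBHom (x y : MyPB F K) where
  fl : x.l ⟶ y.l
  fb : x.b ⟶ y.b
  w : F.map fl = eqToHom x.eq ≫ K.map fb ≫ eqToHom y.eq.symm

instance : CategoryStruct (MyPB F K) where
  Hom x y := MyPBHom x y
  id x := ⟨𝟙 _, 𝟙 _, by simp⟩
  comp f g := ⟨f.fl ≫ g.fl, f.fb ≫ g.fb, by
    rw [Functor.map_comp, Functor.map_comp, f.w, g.w]; simp⟩

@[ext]
lemma MyPB.hom_ext {x y : MyPB F K} {f g : x ⟶ y}
    (h1 : MyPBHom.fl f = MyPBHom.fl g) (h2 : MyPBHom.fb f = MyPBHom.fb g) : f = g :=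
  MyPBHom.ext h1 h2

instance : Category (MyPB F K) where
  id_comp f := by apply MyPB.hom_ext <;> exact Category.id_comp _
  comp_id f := by apply MyPB.hom_ext <;> exact Category.comp_id _
  assoc f g h := by apply MyPB.hom_ext <;> exact Category.assoc _ _ _

@[simp] lemma MyPB.id_fl (x : MyPB F K) : (𝟙 x : MyPBHom x x).fl = 𝟙 x.l := rfl
@[simp] lemma MyPB.id_fb (x : MyPB F K) : (𝟙 x : MyPBHom x x).fb = 𝟙 x.b := rfl
@[simp] lemma MyPB.comp_fl {x y z : MyPB F K} (f : x ⟶ y) (g : y ⟶ z) :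
    (f ≫ g).fl = f.fl ≫ g.fl := rfl
@[simp] lemma MyPB.comp_fb {x y z : MyPB F K} (f : x ⟶ y) (g : y ⟶ z) :
    (f ≫ g).fb = f.fb ≫ g.fb := rfl

variable (F K)

def MyPB.p1 : MyPB F K ⥤ A where
  obj x := x.l
  map f := f.fl

def MyPB.p2 : MyPB F K ⥤ B where
  obj x := x.b
  map f := f.fb

theorem MyPB.comm : MyPB.p1 F K ⋙ F = MyPB.p2 F K ⋙ K := by
  refine CategoryTheory.Functor.ext (fun x => x.eq) ?_
  intro x y f
  simpa [MyPB.p1, MyPB.p2] using f.w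

theorem MyPB.opfib (hF : IsDiscreteOpfib F) : IsDiscreteOpfib (MyPB.p2 F K) := by
  intro x d g
  obtain ⟨⟨l', f⟩, ⟨h, hf⟩, huniq⟩ := hF x.l (eqToHom x.eq ≫ K.map g)
  refine ⟨⟨⟨l', d, h⟩, ⟨f, g, ?_⟩⟩, ⟨rfl, by simp [MyPB.p2]; exact Category.comp_id g⟩, ?_⟩
  · dsimp only at hf
    rw [← Category.assoc, ← hf]; simp
  · rintro ⟨⟨l₂, b₂, e₂⟩, ⟨f₂, g₂, hm⟩⟩ ⟨hb, hg⟩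
    simp only [MyPB.p2] at hb hg
    subst hb
    simp at hg
    subst hg
    have key : (⟨l₂, f₂⟩ : (c' : A) × (x.l ⟶ c')) = ⟨l', f⟩ := by
      apply huniq
      exact ⟨e₂, by rw [hm]; simp⟩
    obtain ⟨rfl, hf2⟩ := Sigma.mk.inj_iff.mp key
    have hf2' : f₂ = f := eq_of_heq hf2
    subst hf2'
    rfl

end PB

lemma const_comp_eq {J : Type*} [Category J] {C : Type*} [Category C] {D : Type*} [Category D]
    (X : C) (F : C ⥤ D) : (Functor.const J).obj X ⋙ F = (Functor.const J).obj (F.obj X) := by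
  refine CategoryTheory.Functor.ext (fun x => rfl) ?_
  intro x y f
  simp

theorem lens_pullback {T S S' V : Cat}
    (G : S ⟶ V) (K : S' ⟶ V) (H : T ⟶ S) (H' : T ⟶ S')
    (hG : HasLensStructure G) (hpb : IsPullback H H' G K) :
    HasLensStructure H' := by
  obtain ⟨Λ, F, P, hF, hP, hPG⟩ := hG
  have hinj : ∀ t₁ t₂ : T, H.toFunctor.obj t₁ = H.toFunctor.obj t₂ →
      H'.toFunctor.obj t₁ = H'.toFunctor.obj t₂ → t₁ = t₂ := by
    intro t₁ t₂ h1 h2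
    let u₁ : T ⟶ T := ((Functor.const T).obj t₁).toCatHom
    let u₂ : T ⟶ T := ((Functor.const T).obj t₂).toCatHom
    have : u₁ = u₂ := by
      apply hpb.hom_ext
      · apply Cat.ext
        show (Functor.const T).obj t₁ ⋙ H.toFunctor = (Functor.const T).obj t₂ ⋙ H.toFunctor
        rw [const_comp_eq, const_comp_eq, h1]
      · apply Cat.ext
        show (Functor.const T).obj t₁ ⋙ H'.toFunctor = (Functor.const T).obj t₂ ⋙ H'.toFunctor
        rw [const_comp_eq, const_comp_eq, h2]
    exact Functor.congr_obj (congrArg Cat.Hom.toFunctor this) t₁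
  have hw : (MyPB.p1 F.toFunctor K.toFunctor ⋙ P.toFunctor) ⋙ G.toFunctor =
      MyPB.p2 F.toFunctor K.toFunctor ⋙ K.toFunctor := by
    rw [Functor.assoc]
    show MyPB.p1 _ _ ⋙ (P ≫ G).toFunctor = _
    rw [hPG]
    exact MyPB.comm _ _
  let Q : Cat.of (MyPB F.toFunctor K.toFunctor) ⟶ T :=
    hpb.lift (MyPB.p1 _ _ ⋙ P.toFunctor).toCatHom (MyPB.p2 _ _).toCatHom (Cat.ext hw)
  have hQ1 : Q ≫ H = (MyPB.p1 F.toFunctor K.toFunctor ⋙ P.toFunctor).toCatHom := hpb.lift_fst _ _ _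
  have hQ2 : Q ≫ H' = (MyPB.p2 F.toFunctor K.toFunctor).toCatHom := hpb.lift_snd _ _ _
  refine ⟨Cat.of (MyPB F.toFunctor K.toFunctor), (MyPB.p2 _ _).toCatHom, Q, MyPB.opfib _ _ hF,
    ⟨?_, ?_⟩, hQ2⟩
  · -- injective
    intro a b hab
    have e1 : P.toFunctor.obj a.l = P.toFunctor.obj b.l := by
      have this : H.toFunctor.obj (Q.toFunctor.obj a) = P.toFunctor.obj a.l :=
        Functor.congr_obj (congrArg Cat.Hom.toFunctor hQ1) a
      have hb : H.toFunctor.obj (Q.toFunctor.obj b) = P.toFunctor.obj b.l :=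
        Functor.congr_obj (congrArg Cat.Hom.toFunctor hQ1) b
      rw [← this, ← hb, hab]
    have e2 : a.b = b.b := by
      have this : H'.toFunctor.obj (Q.toFunctor.obj a) = a.b :=
        Functor.congr_obj (congrArg Cat.Hom.toFunctor hQ2) a
      have hb : H'.toFunctor.obj (Q.toFunctor.obj b) = b.b :=
        Functor.congr_obj (congrArg Cat.Hom.toFunctor hQ2) b
      rw [← this, ← hb, hab]
    have e1' : a.l = b.l := hP.injective e1
    cases a; cases b
    cases e1'; cases e2; rfl
  · -- surjective
    intro t
    obtain ⟨l, hl⟩ := hP.surjective (H.toFunctor.obj t)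
    have heq : F.toFunctor.obj l = K.toFunctor.obj (H'.toFunctor.obj t) := by
      rw [← hPG]
      show G.toFunctor.obj (P.toFunctor.obj l) = _
      rw [hl]
      exact Functor.congr_obj (congrArg Cat.Hom.toFunctor hpb.w) t
    refine ⟨⟨l, H'.toFunctor.obj t, heq⟩, ?_⟩
    apply hinj
    · have this : H.toFunctor.obj (Q.toFunctor.obj ⟨l, H'.toFunctor.obj t, heq⟩) = P.toFunctor.obj l :=
        Functor.congr_obj (congrArg Cat.Hom.toFunctor hQ1) (⟨l, H'.toFunctor.obj t, heq⟩ : MyPB F.toFunctor K.toFunctor)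
      rw [this, hl]
    · have this : H'.toFunctor.obj (Q.toFunctor.obj ⟨l, H'.toFunctor.obj t, heq⟩) = H'.toFunctor.obj t :=
        Functor.congr_obj (congrArg Cat.Hom.toFunctor hQ2) (⟨l, H'.toFunctor.obj t, heq⟩ : MyPB F.toFunctor K.toFunctor)
      rw [this]
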